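/- The map Φ_α : Σ → X_n is Hölder continuous with Hölder continuous inverse on its image: there exist constants C > 0 and γ > 0 such that d_n(Φ_α(σ), Φ_α(σ')) ≤ C·d_Σ(σ, σ')^γ for all σ, σ' ∈ Σ, and there exist constants C' > 0 and γ' > 0 such that d_Σ(σ, σ') ≤ C'·d_n(Φ_α(σ), Φ_α(σ'))^{γ'} for all σ, σ' ∈ Σ. In particular Φ_α is injective and is a homeomorphism onto its image. -/

import Mathlib

open Filter
open scoped ENNReal

noncomputable section

namespace GraphTrees

/-- The word length of an element of a free group: the length of its reduced word. -/
def wlen {n : ℕ} (g : FreeGroup (Fin n)) : ℕ := (FreeGroup.toWord g).length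

/-- `h` is a prefix of `g`. -/
def IsPref {n : ℕ} (h g : FreeGroup (Fin n)) : Prop :=
  wlen h + wlen (h⁻¹ * g) = wlen g

/-- Vertex sets of infinite connected subtrees of the Cayley graph of the free group on
`n` generators which contain the identity: subsets containing `1`, infinite, and
prefix-closed. -/
def IsTree {n : ℕ} (S : Set (FreeGroup (Fin n))) : Prop :=
  1 ∈ S ∧ S.Infinite ∧ ∀ g ∈ S, ∀ h : FreeGroup (Fin n), IsPref h g → h ∈ S

/-- The space `X n` of pointed trees. -/
def X (n : ℕ) : Type := {S : Set (FreeGroup (Fin n)) // IsTree S}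

variable {n : ℕ}

/-- The pattern `B_S(m)` of radius `m` of a pointed tree. -/
def ball (S : X n) (m : ℕ) : Set (FreeGroup (Fin n)) := {g ∈ S.1 | wlen g ≤ m}

/-- The set of radii on which two pointed trees have the same pattern. -/
def agreeSet (S S' : X n) : Set ℕ := {m | ball S m = ball S' m}

/-- The ball metric on the space of pointed trees. -/
def tdist (S S' : X n) : ℝ :=
  letI := Classical.propDecidable (S = S')
  if S = S' then 0 else Real.exp (-((sSup (agreeSet S S') : ℕ) : ℝ))

theorem tdist_eq_of_ne {x y : X n} (h : x ≠ y) :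
    tdist x y = Real.exp (-((sSup (agreeSet x y) : ℕ) : ℝ)) := by
  unfold tdist
  rw [if_neg h]

theorem ball_mono_eq {x y : X n} {k m : ℕ} (hkm : k ≤ m)
    (h : ball x m = ball y m) : ball x k = ball y k := by
  ext g
  constructor
  · rintro ⟨hg, hlen⟩
    have hx : g ∈ ball x m := ⟨hg, hlen.trans hkm⟩
    rw [h] at hx
    exact ⟨hx.1, hlen⟩
  · rintro ⟨hg, hlen⟩
    have hy : g ∈ ball y m := ⟨hg, hlen.trans hkm⟩
    rw [← h] at hy
    exact ⟨hy.1, hlen⟩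

theorem eq_of_agree_all {x y : X n} (h : ∀ m, ball x m = ball y m) : x = y := by
  apply Subtype.ext
  ext g
  constructor
  · intro hg
    have hx : g ∈ ball x (wlen g) := ⟨hg, le_rfl⟩
    rw [h] at hx
    exact hx.1
  · intro hg
    have hy : g ∈ ball y (wlen g) := ⟨hg, le_rfl⟩
    rw [← h] at hy
    exact hy.1

theorem bddAbove_agreeSet {x y : X n} (h : x ≠ y) : BddAbove (agreeSet x y) := by
  by_contra hb
  refine h (eq_of_agree_all fun m => ?_)
  rcases not_bddAbove_iff.mp hb m with ⟨k, hk, hmk⟩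
  exact ball_mono_eq hmk.le hk

theorem ball_zero (x : X n) : ball x 0 = {1} := by
  ext g
  simp only [ball, Set.mem_setOf_eq, Nat.le_zero, Set.mem_singleton_iff]
  constructor
  · rintro ⟨hg, hlen⟩
    exact FreeGroup.toWord_eq_nil_iff.mp (List.length_eq_zero_iff.mp hlen)
  · rintro rfl
    exact ⟨x.2.1, by simp [wlen]⟩

theorem zero_mem_agreeSet (x y : X n) : (0 : ℕ) ∈ agreeSet x y := by
  show ball x 0 = ball y 0
  rw [ball_zero, ball_zero]

theorem tdist_nonneg (x y : X n) : 0 ≤ tdist x y := by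
  rcases eq_or_ne x y with rfl | h
  · unfold tdist
    rw [if_pos rfl]
  · rw [tdist_eq_of_ne h]
    exact (Real.exp_pos _).le

theorem tdist_self (x : X n) : tdist x x = 0 := by
  unfold tdist
  rw [if_pos rfl]

theorem tdist_comm (x y : X n) : tdist x y = tdist y x := by
  by_cases h : x = y
  · subst h; rfl
  · have hs : agreeSet x y = agreeSet y x := by
      ext m
      exact eq_comm
    rw [tdist_eq_of_ne h, tdist_eq_of_ne (Ne.symm h), hs]

theorem tdist_ultra (x y z : X n) : tdist x z ≤ max (tdist x y) (tdist y z) := by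
  rcases eq_or_ne x z with rfl | hxz
  · exact le_max_of_le_left (by rw [tdist_self]; exact tdist_nonneg x y)
  rcases eq_or_ne x y with rfl | hxy
  · exact le_max_of_le_right le_rfl
  rcases eq_or_ne y z with rfl | hyz
  · exact le_max_of_le_left le_rfl
  have hbxy := bddAbove_agreeSet hxy
  have hbyz := bddAbove_agreeSet hyz
  have hbxz := bddAbove_agreeSet hxz
  have hma : sSup (agreeSet x y) ∈ agreeSet x y :=
    Nat.sSup_mem ⟨0, zero_mem_agreeSet x y⟩ hbxy
  have hmb : sSup (agreeSet y z) ∈ agreeSet y z :=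
    Nat.sSup_mem ⟨0, zero_mem_agreeSet y z⟩ hbyz
  have hmin : min (sSup (agreeSet x y)) (sSup (agreeSet y z)) ∈ agreeSet x z := by
    have h1 : ball x (min (sSup (agreeSet x y)) (sSup (agreeSet y z)))
        = ball y (min (sSup (agreeSet x y)) (sSup (agreeSet y z))) :=
      ball_mono_eq (min_le_left _ _) hma
    have h2 : ball y (min (sSup (agreeSet x y)) (sSup (agreeSet y z)))
        = ball z (min (sSup (agreeSet x y)) (sSup (agreeSet y z))) :=
      ball_mono_eq (min_le_right _ _) hmb
    exact h1.trans h2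
  have hle : min (sSup (agreeSet x y)) (sSup (agreeSet y z)) ≤ sSup (agreeSet x z) :=
    le_csSup hbxz hmin
  rw [tdist_eq_of_ne hxz, tdist_eq_of_ne hxy, tdist_eq_of_ne hyz]
  rcases le_total (sSup (agreeSet x y)) (sSup (agreeSet y z)) with hab | hab
  · refine le_max_of_le_left (Real.exp_le_exp.mpr ?_)
    have h2 : ((sSup (agreeSet x y) : ℕ) : ℝ) ≤ ((sSup (agreeSet x z) : ℕ) : ℝ) := by
      exact_mod_cast (min_eq_left hab) ▸ hle
    linarith
  · refine le_max_of_le_right (Real.exp_le_exp.mpr ?_)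
    have h2 : ((sSup (agreeSet y z) : ℕ) : ℝ) ≤ ((sSup (agreeSet x z) : ℕ) : ℝ) := by
      exact_mod_cast (min_eq_right hab) ▸ hle
    linarith

theorem tdist_triangle (x y z : X n) : tdist x z ≤ tdist x y + tdist y z :=
  (tdist_ultra x y z).trans
    (max_le (le_add_of_nonneg_right (tdist_nonneg y z))
      (le_add_of_nonneg_left (tdist_nonneg x y)))

instance : MetricSpace (X n) where
  dist := tdist
  dist_self := tdist_self
  dist_comm := tdist_comm
  dist_triangle := tdist_triangle
  eq_of_dist_eq_zero := by
    intro x y h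
    by_contra hne
    have h' : tdist x y = 0 := h
    rw [tdist_eq_of_ne hne] at h'
    exact (Real.exp_pos _).ne' h'

theorem dist_eq_tdist (x y : X n) : dist x y = tdist x y := rfl

/-- The translate `S · g` of a tree `S` by a vertex `g ∈ S`. -/
def translate {n : ℕ} (S : Set (FreeGroup (Fin n))) (g : FreeGroup (Fin n)) :
    Set (FreeGroup (Fin n)) := (fun h => g⁻¹ * h) '' S

/-- The orbit `O(S) = {S · g : g ∈ S}` of a pointed tree under the pseudogroup action. -/
def orbit (S : X n) : Set (X n) := {S' | ∃ g ∈ S.1, S'.1 = translate S.1 g}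

/-- A subset `Y ⊆ X n` is invariant under the pseudogroup action. -/
def Invariant (Y : Set (X n)) : Prop :=
  ∀ S ∈ Y, ∀ g ∈ S.1, ∀ S' : X n, S'.1 = translate S.1 g → S' ∈ Y

/-- `Λ(Z, m)`: the number of distinct patterns of radius `m` of trees in `Z`. -/
def Lam (Z : Set (X n)) (m : ℕ) : ℕ := ((fun S => ball S m) '' Z).ncard

/-- The lower box dimension of a subset of the space of pointed trees. -/
def lowerBox (Z : Set (X n)) : ℝ≥0∞ :=
  Filter.liminf (fun m : ℕ => ENNReal.ofReal (Real.log (Lam Z m)) / (m : ℝ≥0∞)) Filter.atTop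

/-- The upper box dimension of a subset of the space of pointed trees. -/
def upperBox (Z : Set (X n)) : ℝ≥0∞ :=
  Filter.limsup (fun m : ℕ => ENNReal.ofReal (Real.log (Lam Z m)) / (m : ℝ≥0∞)) Filter.atTop


/-- The metric on the shift space `Σ = 𝒜^ℤ`. -/
def dSigma {A : Type} (σ σ' : ℤ → A) : ℝ :=
  sInf ({x : ℝ | ∃ m : ℕ, (∀ i : ℤ, |i| ≤ (m : ℤ) → σ i = σ' i) ∧
    x = (2 : ℝ) ^ (-(m : ℤ))} ∪ {2})

/-! ### Auxiliary machinery for `shift_embedding_holder` -/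

section ShiftAux

variable {A : Type}

/-- The positive part of the word of a bi-infinite path. -/
def pword (α : A → Fin n) (σ : ℤ → A) (k : ℕ) : List (Fin n × Bool) :=
  (List.range k).map (fun i : ℕ => (α (σ (i : ℤ)), true))

/-- The negative part of the word of a bi-infinite path. -/
def nword (α : A → Fin n) (σ : ℤ → A) (k : ℕ) : List (Fin n × Bool) :=
  (List.range k).map (fun i : ℕ => (α (σ (-(i : ℤ) - 1)), false))

lemma reduce_const_bool (b : Bool) :
    ∀ L : List (Fin n × Bool), (∀ p ∈ L, p.2 = b) → FreeGroup.reduce L = L := by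
  intro L
  induction L with
  | nil => intro _; rfl
  | cons x t ih =>
    intro h
    have ht : FreeGroup.reduce t = t := ih fun p hp => h p (List.mem_cons_of_mem _ hp)
    rw [FreeGroup.reduce.cons, ht]
    cases t with
    | nil => rfl
    | cons y s =>
      have hx : x.2 = b := h x (List.mem_cons_self)
      have hy : y.2 = b := h y (List.mem_cons_of_mem _ (List.mem_cons_self))
      simp only [List.casesOn]
      rw [if_neg]
      rintro ⟨-, h2⟩
      rw [hx, hy] at h2
      exact (Bool.not_ne_self b h2.symm).elim

lemma reduce_pword (α : A → Fin n) (σ : ℤ → A) (k : ℕ) :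
    FreeGroup.reduce (pword α σ k) = pword α σ k := by
  apply reduce_const_bool true
  intro p hp
  simp only [pword, List.mem_map] at hp
  obtain ⟨i, -, rfl⟩ := hp; rfl

lemma reduce_nword (α : A → Fin n) (σ : ℤ → A) (k : ℕ) :
    FreeGroup.reduce (nword α σ k) = nword α σ k := by
  apply reduce_const_bool false
  intro p hp
  simp only [nword, List.mem_map] at hp
  obtain ⟨i, -, rfl⟩ := hp; rfl

variable {α : A → Fin n} {σ σ' : ℤ → A} {lam lam' : ℤ → FreeGroup (Fin n)}

lemma lam_pos (h0 : lam 0 = 1)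
    (hr : ∀ k : ℤ, lam (k + 1) = lam k * FreeGroup.of (α (σ k))) :
    ∀ k : ℕ, lam (k : ℤ) = FreeGroup.mk (pword α σ k) := by
  intro k
  induction k with
  | zero => simpa [pword, FreeGroup.one_eq_mk] using h0
  | succ k ih =>
    have h := hr (k : ℤ)
    push_cast
    rw [h, ih, FreeGroup.of, FreeGroup.mul_mk]
    congr 1
    simp [pword, List.range_succ]

lemma lam_neg (h0 : lam 0 = 1)
    (hr : ∀ k : ℤ, lam (k + 1) = lam k * FreeGroup.of (α (σ k))) :
    ∀ k : ℕ, lam (-(k : ℤ)) = FreeGroup.mk (nword α σ k) := by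
  intro k
  induction k with
  | zero => simpa [nword, FreeGroup.one_eq_mk] using h0
  | succ k ih =>
    have h := hr (-(k : ℤ) - 1)
    rw [sub_add_cancel] at h
    have h2 : lam (-(k : ℤ) - 1) = lam (-(k : ℤ)) * (FreeGroup.of (α (σ (-(k : ℤ) - 1))))⁻¹ := by
      rw [h]; group
    have hcast : (-(↑(k + 1) : ℤ)) = -(k : ℤ) - 1 := by push_cast; ring
    rw [hcast, h2, ih, FreeGroup.of, FreeGroup.inv_mk, FreeGroup.mul_mk]
    congr 1
    simp [nword, List.range_succ, FreeGroup.invRev]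

lemma toWord_lam_pos (h0 : lam 0 = 1)
    (hr : ∀ k : ℤ, lam (k + 1) = lam k * FreeGroup.of (α (σ k))) (k : ℕ) :
    FreeGroup.toWord (lam (k : ℤ)) = pword α σ k := by
  rw [lam_pos h0 hr, FreeGroup.toWord_mk, reduce_pword]

lemma toWord_lam_neg (h0 : lam 0 = 1)
    (hr : ∀ k : ℤ, lam (k + 1) = lam k * FreeGroup.of (α (σ k))) (k : ℕ) :
    FreeGroup.toWord (lam (-(k : ℤ))) = nword α σ k := by
  rw [lam_neg h0 hr, FreeGroup.toWord_mk, reduce_nword]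

lemma wlen_lam (h0 : lam 0 = 1)
    (hr : ∀ k : ℤ, lam (k + 1) = lam k * FreeGroup.of (α (σ k))) (j : ℤ) :
    wlen (lam j) = j.natAbs := by
  rcases Int.natAbs_eq j with h | h
  · conv_lhs => rw [h, wlen, toWord_lam_pos h0 hr]
    rw [pword, List.length_map, List.length_range]
  · conv_lhs => rw [h, wlen, toWord_lam_neg h0 hr]
    rw [nword, List.length_map, List.length_range]

lemma mem_pword_bool {p : Fin n × Bool} {k : ℕ} (hp : p ∈ pword α σ k) : p.2 = true := by
  simp only [pword, List.mem_map] at hp; obtain ⟨i, -, rfl⟩ := hp; rfl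

lemma mem_nword_bool {p : Fin n × Bool} {k : ℕ} (hp : p ∈ nword α σ k) : p.2 = false := by
  simp only [nword, List.mem_map] at hp; obtain ⟨i, -, rfl⟩ := hp; rfl

lemma pword_ne_nword {k k' : ℕ} (hk : 0 < k) :
    pword α σ k ≠ nword α σ' k' := by
  intro h
  have hp : (α (σ (0 : ℤ)), true) ∈ pword α σ k :=
    List.mem_map.mpr ⟨0, List.mem_range.mpr hk, rfl⟩
  have h2 := mem_nword_bool (σ := σ') (h ▸ hp)
  exact Bool.noConfusion h2

/-- Index determination: the vertex `lam j` determines `j`. -/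
lemma lam_index_eq (h0 : lam 0 = 1)
    (hr : ∀ k : ℤ, lam (k + 1) = lam k * FreeGroup.of (α (σ k)))
    (h0' : lam' 0 = 1)
    (hr' : ∀ k : ℤ, lam' (k + 1) = lam' k * FreeGroup.of (α (σ' k)))
    {j j' : ℤ} (h : lam j = lam' j') : j = j' := by
  have hlen : j.natAbs = j'.natAbs := by
    rw [← wlen_lam h0 hr j, ← wlen_lam h0' hr' j', h]
  rcases Nat.eq_zero_or_pos j.natAbs with hz | hpos
  · omega
  have hw : FreeGroup.toWord (lam j) = FreeGroup.toWord (lam' j') := by rw [h]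
  rcases Int.natAbs_eq j with hj | hj <;> rcases Int.natAbs_eq j' with hj' | hj'
  · omega
  · exfalso
    rw [hj, hj', toWord_lam_pos h0 hr, toWord_lam_neg h0' hr'] at hw
    exact pword_ne_nword hpos hw
  · exfalso
    rw [hj, hj', toWord_lam_neg h0 hr, toWord_lam_pos h0' hr'] at hw
    exact pword_ne_nword (hlen ▸ hpos) hw.symm
  · omega

lemma sigma_eq_of_pword_eq (hα : Function.Injective α) {k : ℕ}
    (h : pword α σ k = pword α σ' k) {i : ℕ} (hi : i < k) : σ i = σ' i := by
  simp only [pword] at h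
  have h' := List.map_inj_left.mp h
  have := h' i (List.mem_range.mpr hi)
  exact hα (congrArg Prod.fst this)

lemma sigma_eq_of_nword_eq (hα : Function.Injective α) {k : ℕ}
    (h : nword α σ k = nword α σ' k) {i : ℕ} (hi : i < k) :
    σ (-(i : ℤ) - 1) = σ' (-(i : ℤ) - 1) := by
  simp only [nword] at h
  have h' := List.map_inj_left.mp h
  have := h' i (List.mem_range.mpr hi)
  exact hα (congrArg Prod.fst this)

lemma ball_eq_range {S : X n} (hS : S.1 = Set.range lam) (h0 : lam 0 = 1)
    (hr : ∀ k : ℤ, lam (k + 1) = lam k * FreeGroup.of (α (σ k))) (m : ℕ) :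
    ball S m = {g | ∃ k : ℤ, k.natAbs ≤ m ∧ g = lam k} := by
  ext g
  constructor
  · rintro ⟨hg, hlen⟩
    rw [hS] at hg
    obtain ⟨k, rfl⟩ := hg
    exact ⟨k, by rwa [wlen_lam h0 hr] at hlen, rfl⟩
  · rintro ⟨k, hk, rfl⟩
    refine ⟨?_, by rwa [wlen_lam h0 hr]⟩
    rw [hS]; exact Set.mem_range_self k

lemma lam_eq_lam_of_agree (h0 : lam 0 = 1)
    (hr : ∀ k : ℤ, lam (k + 1) = lam k * FreeGroup.of (α (σ k)))
    (h0' : lam' 0 = 1)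
    (hr' : ∀ k : ℤ, lam' (k + 1) = lam' k * FreeGroup.of (α (σ' k)))
    {m : ℕ} (hag : ∀ i : ℤ, |i| ≤ (m : ℤ) → σ i = σ' i)
    {k : ℤ} (hk : k.natAbs ≤ m) : lam k = lam' k := by
  rcases Int.natAbs_eq k with h | h
  · rw [h, lam_pos h0 hr, lam_pos h0' hr']
    congr 1
    apply List.map_congr_left
    intro i hi
    rw [List.mem_range] at hi
    have : σ (i : ℤ) = σ' (i : ℤ) := hag i (by
      rw [abs_of_nonneg (Int.ofNat_nonneg i)]
      omega)
    rw [this]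
  · rw [h, lam_neg h0 hr, lam_neg h0' hr']
    congr 1
    apply List.map_congr_left
    intro i hi
    rw [List.mem_range] at hi
    have : σ (-(i : ℤ) - 1) = σ' (-(i : ℤ) - 1) := hag _ (by
      rw [abs_of_nonpos (by omega)]
      omega)
    rw [this]

/-- Claim A: if `σ` and `σ'` agree on the window of radius `m`, then the trees have the same
pattern of radius `m`. -/
lemma ball_eq_of_agree {S S' : X n} (hS : S.1 = Set.range lam) (hS' : S'.1 = Set.range lam')
    (h0 : lam 0 = 1)
    (hr : ∀ k : ℤ, lam (k + 1) = lam k * FreeGroup.of (α (σ k)))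
    (h0' : lam' 0 = 1)
    (hr' : ∀ k : ℤ, lam' (k + 1) = lam' k * FreeGroup.of (α (σ' k)))
    {m : ℕ} (hag : ∀ i : ℤ, |i| ≤ (m : ℤ) → σ i = σ' i) :
    ball S m = ball S' m := by
  rw [ball_eq_range hS h0 hr, ball_eq_range hS' h0' hr']
  ext g
  constructor
  · rintro ⟨k, hk, rfl⟩
    exact ⟨k, hk, lam_eq_lam_of_agree h0 hr h0' hr' hag hk⟩
  · rintro ⟨k, hk, rfl⟩
    exact ⟨k, hk, (lam_eq_lam_of_agree h0 hr h0' hr' hag hk).symm⟩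

/-- Claim B: if the trees have the same pattern of radius `m + 1`, then `σ` and `σ'` agree on
the window of radius `m`. -/
lemma agree_of_ball_eq (hα : Function.Injective α)
    {S S' : X n} (hS : S.1 = Set.range lam) (hS' : S'.1 = Set.range lam')
    (h0 : lam 0 = 1)
    (hr : ∀ k : ℤ, lam (k + 1) = lam k * FreeGroup.of (α (σ k)))
    (h0' : lam' 0 = 1)
    (hr' : ∀ k : ℤ, lam' (k + 1) = lam' k * FreeGroup.of (α (σ' k)))
    {m : ℕ} (hb : ball S (m + 1) = ball S' (m + 1)) :
    ∀ i : ℤ, |i| ≤ (m : ℤ) → σ i = σ' i := by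
  rw [ball_eq_range hS h0 hr, ball_eq_range hS' h0' hr'] at hb
  intro i hi
  have hi' : -(m : ℤ) ≤ i ∧ i ≤ m := abs_le.mp hi
  rcases le_or_gt 0 i with hpos | hneg
  · set a : ℕ := i.toNat with ha
    have hia : i = (a : ℤ) := by omega
    have hmem : lam ((a + 1 : ℕ) : ℤ) ∈ {g | ∃ k : ℤ, k.natAbs ≤ m + 1 ∧ g = lam k} :=
      ⟨((a + 1 : ℕ) : ℤ), by simp; omega, rfl⟩
    rw [hb] at hmem
    obtain ⟨j, hj, hje⟩ := hmem
    have hji : ((a + 1 : ℕ) : ℤ) = j := lam_index_eq h0 hr h0' hr' hje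
    have hw : pword α σ (a + 1) = pword α σ' (a + 1) := by
      rw [← toWord_lam_pos h0 hr, ← toWord_lam_pos h0' hr', hje, hji]
    rw [hia]
    exact sigma_eq_of_pword_eq hα hw (Nat.lt_succ_self a)
  · set a : ℕ := (-i - 1).toNat with ha
    have hia : i = -(a : ℤ) - 1 := by omega
    have hmem : lam (-((a + 1 : ℕ) : ℤ)) ∈ {g | ∃ k : ℤ, k.natAbs ≤ m + 1 ∧ g = lam k} :=
      ⟨-((a + 1 : ℕ) : ℤ), by simp; omega, rfl⟩
    rw [hb] at hmem
    obtain ⟨j, hj, hje⟩ := hmem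
    have hji : -((a + 1 : ℕ) : ℤ) = j := lam_index_eq h0 hr h0' hr' hje
    have hw : nword α σ (a + 1) = nword α σ' (a + 1) := by
      rw [← toWord_lam_neg h0 hr, ← toWord_lam_neg h0' hr', hje, hji]
    rw [hia]
    exact sigma_eq_of_nword_eq hα hw (Nat.lt_succ_self a)

/-- If two trees have the same pattern of radius `m` then their distance is at most `e^{-m}`. -/
lemma dist_le_exp_of_ball_eq {x y : X n} {m : ℕ} (h : ball x m = ball y m) :
    dist x y ≤ Real.exp (-(m : ℝ)) := by
  rcases eq_or_ne x y with rfl | hne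
  · rw [dist_self]; exact (Real.exp_pos _).le
  · rw [dist_eq_tdist, tdist_eq_of_ne hne]
    apply Real.exp_le_exp.mpr
    have hle : m ≤ sSup (agreeSet x y) := le_csSup (bddAbove_agreeSet hne) h
    have : (m : ℝ) ≤ ((sSup (agreeSet x y) : ℕ) : ℝ) := by exact_mod_cast hle
    linarith

/-- The defining set for `dSigma`. -/
def dSigmaSet (σ σ' : ℤ → A) : Set ℝ :=
  {x : ℝ | ∃ m : ℕ, (∀ i : ℤ, |i| ≤ (m : ℤ) → σ i = σ' i) ∧ x = (2 : ℝ) ^ (-(m : ℤ))} ∪ {2}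

lemma dSigma_eq_sInf (σ σ' : ℤ → A) : dSigma σ σ' = sInf (dSigmaSet σ σ') := rfl

lemma dSigmaSet_nonneg {σ σ' : ℤ → A} {x : ℝ} (hx : x ∈ dSigmaSet σ σ') : 0 ≤ x := by
  rcases hx with ⟨m, -, rfl⟩ | hx
  · positivity
  · rw [Set.mem_singleton_iff.mp hx]; norm_num

lemma dSigmaSet_bddBelow (σ σ' : ℤ → A) : BddBelow (dSigmaSet σ σ') :=
  ⟨0, fun _ hx => dSigmaSet_nonneg hx⟩

lemma dSigma_nonneg (σ σ' : ℤ → A) : 0 ≤ dSigma σ σ' :=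
  Real.sInf_nonneg fun _ hx => dSigmaSet_nonneg hx

lemma dSigma_le_two (σ σ' : ℤ → A) : dSigma σ σ' ≤ 2 :=
  csInf_le (dSigmaSet_bddBelow σ σ') (Or.inr rfl)

lemma dSigma_le_of_agree {σ σ' : ℤ → A} {m : ℕ} (h : ∀ i : ℤ, |i| ≤ (m : ℤ) → σ i = σ' i) :
    dSigma σ σ' ≤ (2 : ℝ) ^ (-(m : ℤ)) :=
  csInf_le (dSigmaSet_bddBelow σ σ') (Or.inl ⟨m, h, rfl⟩)

lemma dSigma_self (σ : ℤ → A) : dSigma σ σ = 0 := by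
  refine le_antisymm ?_ (dSigma_nonneg σ σ)
  by_contra hlt
  push_neg at hlt
  obtain ⟨m, hm⟩ := exists_pow_lt_of_lt_one hlt (by norm_num : (1 / 2 : ℝ) < 1)
  have h2 : (2 : ℝ) ^ (-(m : ℤ)) = (1 / 2 : ℝ) ^ m := by
    rw [zpow_neg, one_div, inv_pow, zpow_natCast]
  have := dSigma_le_of_agree (σ := σ) (σ' := σ) (m := m) (fun _ _ => rfl)
  rw [h2] at this
  linarith

lemma int_abs_le_natAbs' (i : ℤ) : |i| ≤ (i.natAbs : ℤ) := by
  rw [Int.abs_eq_natAbs]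

lemma dSigma_mem {σ σ' : ℤ → A} (h : σ ≠ σ') : dSigma σ σ' ∈ dSigmaSet σ σ' := by
  obtain ⟨i0, hi0⟩ := Function.ne_iff.mp h
  have hsub : dSigmaSet σ σ' ⊆
      insert (2 : ℝ) ((fun m : ℕ => (2 : ℝ) ^ (-(m : ℤ))) '' Set.Iic i0.natAbs) := by
    rintro x (⟨m, hm, rfl⟩ | hx)
    · refine Set.mem_insert_of_mem _ ⟨m, ?_, rfl⟩
      by_contra hmi
      simp only [Set.mem_Iic, not_le] at hmi
      exact hi0 (hm i0 ((int_abs_le_natAbs' i0).trans (by exact_mod_cast hmi.le)))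
    · exact Set.mem_insert_iff.mpr (Or.inl hx)
  have hfin : (dSigmaSet σ σ').Finite :=
    Set.Finite.subset (((Set.finite_Iic _).image _).insert 2) hsub
  exact Set.Nonempty.csInf_mem ⟨2, Or.inr rfl⟩ hfin

lemma int_abs_le_natAbs (i : ℤ) : |i| ≤ (i.natAbs : ℤ) := by
  rw [Int.abs_eq_natAbs]

lemma exp_rpow' (a γ : ℝ) : Real.exp a ^ (γ : ℝ) = Real.exp (a * γ) := by
  rw [Real.rpow_def_of_pos (Real.exp_pos _), Real.log_exp]

lemma two_zpow_neg_eq_exp (m : ℕ) :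
    (2 : ℝ) ^ (-(m : ℤ)) = Real.exp (-(m : ℝ) * Real.log 2) := by
  rw [← Real.rpow_intCast 2 (-(m : ℤ))]
  rw [Real.rpow_def_of_pos (by norm_num : (0 : ℝ) < 2)]
  push_cast
  ring_nf

end ShiftAux


/-- The equivariant embedding `Φ_α` of the shift space `Σ = 𝒜^ℤ` into `X_n` is Hölder
continuous with Hölder continuous inverse on its image; in particular it is injective and
a homeomorphism onto its image. -/
theorem shift_embedding_holder (n : ℕ) (hn : 2 ≤ n) (A : Type) [Fintype A]
    [TopologicalSpace A] [DiscreteTopology A]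
    (hA2 : 2 ≤ Fintype.card A) (hAn : Fintype.card A ≤ n)
    (α : A → Fin n) (hα : Function.Injective α)
    (Φ : (ℤ → A) → X n)
    (hΦ : ∀ σ : ℤ → A, ∃ lam : ℤ → FreeGroup (Fin n),
      lam 0 = 1 ∧ (∀ k : ℤ, lam (k + 1) = lam k * FreeGroup.of (α (σ k))) ∧
      (Φ σ).1 = Set.range lam) :
    (∃ C > (0 : ℝ), ∃ γ > (0 : ℝ), ∀ σ σ' : ℤ → A,
        dist (Φ σ) (Φ σ') ≤ C * dSigma σ σ' ^ γ) ∧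
    (∃ C' > (0 : ℝ), ∃ γ' > (0 : ℝ), ∀ σ σ' : ℤ → A,
        dSigma σ σ' ≤ C' * dist (Φ σ) (Φ σ') ^ γ') ∧
    Function.Injective Φ ∧ Topology.IsEmbedding Φ := by
  classical
  choose lam h0 hr hrange using hΦ
  have hlog2 : (0 : ℝ) < Real.log 2 := Real.log_pos (by norm_num)
  -- Injectivity
  have hinj : Function.Injective Φ := by
    intro σ σ' h
    funext i
    have hb : ball (Φ σ) (i.natAbs + 1) = ball (Φ σ') (i.natAbs + 1) := by rw [h]
    exact agree_of_ball_eq hα (hrange σ) (hrange σ') (h0 σ) (hr σ) (h0 σ') (hr σ') hb i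
      (int_abs_le_natAbs i)
  refine ⟨⟨1, one_pos, 1 / Real.log 2, by positivity, ?_⟩,
    ⟨2, by norm_num, Real.log 2, hlog2, ?_⟩, hinj, ?_⟩
  · -- forward Hölder bound
    intro σ σ'
    set γ : ℝ := 1 / Real.log 2 with hγ
    rw [one_mul]
    rcases eq_or_ne σ σ' with rfl | hne
    · rw [dist_self]
      exact Real.rpow_nonneg (dSigma_nonneg σ σ) γ
    · rcases dSigma_mem hne with ⟨m, hm, hd⟩ | hd
      · -- dSigma σ σ' = 2 ^ (-m), and σ, σ' agree on the window of radius m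
        rw [hd]
        have hball : ball (Φ σ) m = ball (Φ σ') m :=
          ball_eq_of_agree (hrange σ) (hrange σ') (h0 σ) (hr σ) (h0 σ') (hr σ') hm
        have h1 : dist (Φ σ) (Φ σ') ≤ Real.exp (-(m : ℝ)) := dist_le_exp_of_ball_eq hball
        have h2 : ((2 : ℝ) ^ (-(m : ℤ))) ^ γ = Real.exp (-(m : ℝ)) := by
          rw [two_zpow_neg_eq_exp, exp_rpow', hγ]
          congr 1
          field_simp
        rw [h2]
        exact h1
      · -- dSigma σ σ' = 2
        rw [Set.mem_singleton_iff.mp hd]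
        have hball : ball (Φ σ) 0 = ball (Φ σ') 0 := by rw [ball_zero, ball_zero]
        have h1 : dist (Φ σ) (Φ σ') ≤ 1 := by
          have := dist_le_exp_of_ball_eq hball
          simpa using this
        have h2 : (1 : ℝ) ≤ (2 : ℝ) ^ γ := by
          have : (1 : ℝ) = (2 : ℝ) ^ (0 : ℝ) := (Real.rpow_zero 2).symm
          rw [this]
          exact Real.rpow_le_rpow_of_exponent_le one_le_two (by positivity)
        exact h1.trans h2
  · -- backward Hölder bound
    intro σ σ'
    rcases eq_or_ne (Φ σ) (Φ σ') with hφ | hφ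
    · have : σ = σ' := hinj hφ
      subst this
      rw [dSigma_self, hφ, dist_self, Real.zero_rpow (ne_of_gt hlog2), mul_zero]
    · rw [dist_eq_tdist, tdist_eq_of_ne hφ]
      set M : ℕ := sSup (agreeSet (Φ σ) (Φ σ')) with hM
      have hMball : ball (Φ σ) M = ball (Φ σ') M :=
        Nat.sSup_mem ⟨0, zero_mem_agreeSet _ _⟩ (bddAbove_agreeSet hφ)
      rcases Nat.eq_zero_or_pos M with hM0 | hMpos
      · rw [hM0]
        simp only [Nat.cast_zero, neg_zero, Real.exp_zero, Real.one_rpow, mul_one]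
        exact dSigma_le_two σ σ'
      · obtain ⟨m, hMm⟩ := Nat.exists_eq_succ_of_ne_zero hMpos.ne'
        rw [hMm] at hMball
        rw [hMm]
        have hag : ∀ i : ℤ, |i| ≤ (m : ℤ) → σ i = σ' i :=
          agree_of_ball_eq hα (hrange σ) (hrange σ') (h0 σ) (hr σ) (h0 σ') (hr σ') hMball
        have h1 : dSigma σ σ' ≤ (2 : ℝ) ^ (-(m : ℤ)) := dSigma_le_of_agree hag
        have key : 2 * Real.exp (-((m + 1 : ℕ) : ℝ)) ^ Real.log 2 = (2 : ℝ) ^ (-(m : ℤ)) := by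
          rw [exp_rpow', two_zpow_neg_eq_exp]
          have hc : (-((m + 1 : ℕ) : ℝ)) * Real.log 2
              = -(m : ℝ) * Real.log 2 + (-Real.log 2) := by push_cast; ring
          rw [hc, Real.exp_add, Real.exp_neg, Real.exp_log (by norm_num : (0:ℝ) < 2)]
          ring
        rw [key]
        exact h1
  · -- embedding
    have hcont : Continuous Φ := by
      rw [continuous_iff_continuousAt]
      intro σ
      rw [ContinuousAt, Metric.tendsto_nhds]
      intro ε hε
      obtain ⟨m, hm⟩ := exists_nat_gt (-Real.log ε)
      have hV : {σ' : ℤ → A | ∀ i : ℤ, |i| ≤ (m : ℤ) → σ' i = σ i} ∈ nhds σ := by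
        have : {σ' : ℤ → A | ∀ i : ℤ, |i| ≤ (m : ℤ) → σ' i = σ i}
            = ⋂ i ∈ Finset.Icc (-(m : ℤ)) (m : ℤ), {σ' : ℤ → A | σ' i = σ i} := by
          ext σ'
          simp only [Set.mem_setOf_eq, Set.mem_iInter, Finset.mem_Icc]
          constructor
          · intro h i hi
            exact h i (abs_le.mpr hi)
          · intro h i hi
            exact h i (abs_le.mp hi)
        rw [this]
        refine (isOpen_biInter_finset fun i _ => ?_).mem_nhds ?_
        · have hrw : {σ' : ℤ → A | σ' i = σ i} = (fun σ' : ℤ → A => σ' i) ⁻¹' {σ i} := rfl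
          rw [hrw]
          exact (continuous_apply i).isOpen_preimage _ (isOpen_discrete _)
        · exact Set.mem_iInter₂.mpr fun i _ => rfl
      filter_upwards [hV] with σ' hσ'
      have hball : ball (Φ σ') m = ball (Φ σ) m :=
        ball_eq_of_agree (hrange σ') (hrange σ) (h0 σ') (hr σ') (h0 σ) (hr σ) hσ'
      have h1 : dist (Φ σ') (Φ σ) ≤ Real.exp (-(m : ℝ)) := dist_le_exp_of_ball_eq hball
      have h2 : Real.exp (-(m : ℝ)) < ε := by
        rw [← Real.exp_log hε]
        exact Real.exp_lt_exp.mpr (by linarith)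
      exact lt_of_le_of_lt h1 h2
    exact (hcont.isClosedEmbedding hinj).isEmbedding


end GraphTrees
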